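/- Let a > 1, b, c > 0, and let Λ = {(a^j, bk, S_{bk} A_{a^j} c m) : j,k ∈ ℤ, m ∈ ℤ²} ⊂ S (the co-shearlet parameter set) with weight w ≡ 1. Then D⁺(Λ,w) = ∞ and D⁻(Λ,w) = 0. -/

import Mathlib

open MeasureTheory Real Filter Set
open scoped ENNReal
noncomputable section

/-- The parabolic scaling matrix `A_a = diag(a, √a)` acting on `ℝ²`. -/
def Aa (a : ℝ) (t : ℝ × ℝ) : ℝ × ℝ := (a * t.1, Real.sqrt a * t.2)

/-- The shear matrix `S_s = [[1,s],[0,1]]` acting on `ℝ²`. -/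
def Ss (s : ℝ) (t : ℝ × ℝ) : ℝ × ℝ := (t.1 + s * t.2, t.2)

/-- Underlying space of the shearlet group: `(a, s, t₁, t₂)`. -/
abbrev SG := ℝ × ℝ × ℝ × ℝ

/-- Shearlet group multiplication
`(a,s,t)·(a',s',t') = (a'a, s' + s√a', t' + S_{s'} A_{a'} t)`. -/
def smul (p q : SG) : SG :=
  (q.1 * p.1, q.2.1 + p.2.1 * Real.sqrt q.1, q.2.2 + Ss q.2.1 (Aa q.1 p.2.2))

/-- The box `Q_h = [e^{-h/2}, e^{h/2}) × [-h/2, h/2) × [-h/2, h/2)²`. -/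
def Qbox (h : ℝ) : Set SG :=
  Set.Ico (Real.exp (-h/2)) (Real.exp (h/2)) ×ˢ
    (Set.Ico (-h/2) (h/2) ×ˢ (Set.Ico (-h/2) (h/2) ×ˢ Set.Ico (-h/2) (h/2)))

/-- The left-translated box `Q_h(g) = g · Q_h`. -/
def boxAt (h : ℝ) (g : SG) : Set SG := (fun p => smul g p) '' Qbox h

/-- Weighted number of points of `Λ` in `K`: `#_w(Λ ∩ K)`. -/
def wNum (Λ : Set SG) (w : SG → ℝ) (K : Set SG) : ℝ≥0∞ :=
  ∑' p : ↥(Λ ∩ K), ENNReal.ofReal (w p)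

/-- Upper weighted shearlet density `D⁺(Λ, w)`. -/
def upperDensity (Λ : Set SG) (w : SG → ℝ) : ℝ≥0∞ :=
  Filter.limsup (fun h : ℝ =>
    ⨆ (g : SG) (_ : 0 < g.1), wNum Λ w (boxAt h g) / ENNReal.ofReal (h ^ 4)) Filter.atTop

/-- Lower weighted shearlet density `D⁻(Λ, w)`. -/
def lowerDensity (Λ : Set SG) (w : SG → ℝ) : ℝ≥0∞ :=
  Filter.liminf (fun h : ℝ =>
    ⨅ (g : SG) (_ : 0 < g.1), wNum Λ w (boxAt h g) / ENNReal.ofReal (h ^ 4)) Filter.atTop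

set_option maxHeartbeats 1000000 in
/-- For large `h`, the translate of `Q_h` by `(e^h, 0, h e^{h/2}, 0)` misses the
co-shearlet set entirely. -/
private lemma lower_box_empty (a b c h : ℝ) (ha : 1 < a) (hc : 0 < c)
    (hh0 : 1 ≤ h) (hh : 2 * h < c * Real.exp (h / 4)) :
    {p : SG | ∃ (j k : ℤ) (m : ℤ × ℤ),
        p = ((a ^ j : ℝ), b * k, Ss (b * k) (Aa (a ^ j) ((c * m.1 : ℝ), (c * m.2 : ℝ))))} ∩
      boxAt h (Real.exp h, 0, h * Real.exp (h / 2), 0) = ∅ := by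
  have ha0 : (0 : ℝ) < a := by linarith
  ext p
  simp only [Set.mem_inter_iff, Set.mem_empty_iff_false, iff_false, not_and,
    Set.mem_setOf_eq, boxAt, Set.mem_image]
  rintro ⟨j, k, m, rfl⟩ ⟨q, hq, hsm⟩
  obtain ⟨⟨hq11, hq12⟩, ⟨hq21, hq22⟩, ⟨hq31, hq32⟩, hq41, hq42⟩ :
      (Real.exp (-h/2) ≤ q.1 ∧ q.1 < Real.exp (h/2)) ∧
      (-h/2 ≤ q.2.1 ∧ q.2.1 < h/2) ∧
      (-h/2 ≤ q.2.2.1 ∧ q.2.2.1 < h/2) ∧ (-h/2 ≤ q.2.2.2 ∧ q.2.2.2 < h/2) := by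
    simpa [Qbox, Set.mem_prod, Set.mem_Ico] using hq
  obtain ⟨h1, h2, h3, h4⟩ :
      q.1 * Real.exp h = a ^ j ∧
      q.2.1 = b * k ∧
      q.2.2.1 + (q.1 * (h * Real.exp (h / 2)) + q.2.1 * (Real.sqrt q.1 * 0)) =
        a ^ j * (c * m.1) + b * k * (Real.sqrt (a ^ j) * (c * m.2)) ∧
      q.2.2.2 + Real.sqrt q.1 * 0 = Real.sqrt (a ^ j) * (c * m.2) := by
    simpa [smul, Ss, Aa, Prod.ext_iff] using hsm
  rw [mul_zero, add_zero] at h4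
  rw [mul_zero, mul_zero, add_zero] at h3
  have hajpos : (0 : ℝ) < a ^ j := zpow_pos ha0 j
  have hexp1 : Real.exp (-h/2) * Real.exp h = Real.exp (h/2) := by
    rw [← Real.exp_add]; ring_nf
  have haj : Real.exp (h/2) ≤ a ^ j := by
    rw [← h1, ← hexp1]
    exact mul_le_mul_of_nonneg_right hq11 (Real.exp_pos h).le
  have hsqrt : Real.exp (h/4) ≤ Real.sqrt (a ^ j) := by
    have hs : Real.sqrt (Real.exp (h/2)) = Real.exp (h/4) := by
      rw [show Real.exp (h/2) = (Real.exp (h/4)) ^ 2 by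
        rw [sq, ← Real.exp_add]; ring_nf]
      exact Real.sqrt_sq (Real.exp_pos _).le
    rw [← hs]
    exact Real.sqrt_le_sqrt haj
  have hsqpos : (0 : ℝ) < Real.sqrt (a ^ j) := lt_of_lt_of_le (Real.exp_pos _) hsqrt
  -- first: m.2 = 0
  have hm2 : m.2 = 0 := by
    by_contra hm2
    have h1abs : (1 : ℝ) ≤ |(m.2 : ℝ)| := by exact_mod_cast Int.one_le_abs hm2
    have habs : |Real.sqrt (a ^ j) * (c * m.2)| ≤ h / 2 := by
      rw [← h4]; exact abs_le.mpr ⟨by linarith, by linarith⟩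
    rw [abs_mul, abs_mul, abs_of_nonneg hsqpos.le, abs_of_nonneg hc.le] at habs
    nlinarith [mul_le_mul_of_nonneg_left h1abs (mul_pos hsqpos hc).le,
      mul_le_mul_of_nonneg_right hsqrt hc.le]
  rw [hm2] at h3
  simp only [Int.cast_zero, mul_zero, add_zero] at h3
  -- express the translation term
  have hq1 : q.1 = a ^ j * Real.exp (-h) := by
    have hne : Real.exp h ≠ 0 := (Real.exp_pos h).ne'
    rw [Real.exp_neg, ← h1]
    field_simp
  have hexp2 : Real.exp (-h) * Real.exp (h/2) = Real.exp (-h/2) := by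
    rw [← Real.exp_add]; ring_nf
  have hD : q.1 * (h * Real.exp (h/2)) = a ^ j * (h * Real.exp (-h/2)) := by
    rw [hq1]
    calc a ^ j * Real.exp (-h) * (h * Real.exp (h/2))
        = a ^ j * (h * (Real.exp (-h) * Real.exp (h/2))) := by ring
      _ = a ^ j * (h * Real.exp (-h/2)) := by rw [hexp2]
  rw [hD] at h3
  -- basic exp inequalities
  have hE1 : Real.exp (h/4) ≤ Real.exp (h/2) := Real.exp_le_exp.mpr (by linarith)
  have hE2 : Real.exp (-h/2) * Real.exp (h/2) = 1 := by
    rw [← Real.exp_add]; ring_nf; exact Real.exp_zero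
  have hEpos : (0:ℝ) < Real.exp (-h/2) := Real.exp_pos _
  have hSpos : (0:ℝ) < Real.exp (h/2) := Real.exp_pos _
  have hE2c : c * (Real.exp (-h/2) * Real.exp (h/2)) = c := by rw [hE2, mul_one]
  have hE : h * Real.exp (-h/2) < c / 2 := by
    linarith [mul_lt_mul_of_pos_right hh hEpos,
      mul_le_mul_of_nonneg_right (mul_le_mul_of_nonneg_left hE1 hc.le) hEpos.le, hE2c]
  clear hsm hq h1 h2 h4 hq1 hD hexp1 hexp2 hq12 hq21 hq22 hq41 hq42 hsqrt hsqpos hm2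
  rcases eq_or_ne m.1 0 with hm1 | hm1
  · rw [hm1] at h3
    simp only [Int.cast_zero, mul_zero, add_zero] at h3
    have hE2h : h * (Real.exp (-h/2) * Real.exp (h/2)) = h := by rw [hE2, mul_one]
    nlinarith [mul_le_mul_of_nonneg_right haj
      (mul_nonneg (by linarith : (0:ℝ) ≤ h) hEpos.le)]
  · have h1abs : (1 : ℝ) ≤ |(m.1 : ℝ)| := by exact_mod_cast Int.one_le_abs hm1
    rcases (Ne.lt_or_gt hm1) with hneg | hpos
    · have hm1le : ((m.1 : ℤ) : ℝ) ≤ -1 := by exact_mod_cast Int.le_sub_one_of_lt hneg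
      linarith [mul_le_mul_of_nonneg_left hm1le (mul_pos hajpos hc).le,
        mul_nonneg (mul_nonneg hajpos.le (by linarith : (0:ℝ) ≤ h)) hEpos.le,
        mul_le_mul_of_nonneg_left hE1 hc.le,
        mul_le_mul_of_nonneg_right haj hc.le]
    · have hm1ge : (1 : ℝ) ≤ ((m.1 : ℤ) : ℝ) := by exact_mod_cast hpos
      linarith [mul_le_mul_of_nonneg_left hm1ge (mul_pos hajpos hc).le,
        mul_lt_mul_of_pos_left hE hajpos,
        mul_le_mul_of_nonneg_right haj (by positivity : (0:ℝ) ≤ c/2),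
        mul_le_mul_of_nonneg_right hE1 (by positivity : (0:ℝ) ≤ c/2)]

set_option maxHeartbeats 1000000 in
/-- For large `h`, the box `Q_h` itself contains at least `e^{h/2}` points of the
co-shearlet set. -/
private lemma upper_box_count (a b c h : ℝ) (ha : 1 < a) (hb : 0 < b) (hc : 0 < c)
    (hh0 : 1 ≤ h) (hha : Real.log a < h) (hhac : 4 * a * c < h) :
    ENNReal.ofReal (Real.exp (h / 2)) ≤
      wNum {p : SG | ∃ (j k : ℤ) (m : ℤ × ℤ),
        p = ((a ^ j : ℝ), b * k, Ss (b * k) (Aa (a ^ j) ((c * m.1 : ℝ), (c * m.2 : ℝ))))}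
        (fun _ => 1) (Qbox h) := by
  have ha0 : (0 : ℝ) < a := by linarith
  set Λ : Set SG := {p : SG | ∃ (j k : ℤ) (m : ℤ × ℤ),
    p = ((a ^ j : ℝ), b * k, Ss (b * k) (Aa (a ^ j) ((c * m.1 : ℝ), (c * m.2 : ℝ))))} with hΛ
  set L := Real.log a with hLdef
  have hL0 : 0 < L := Real.log_pos ha
  set j : ℤ := -⌊h / (2 * L)⌋ with hj
  have hjl : -(h / 2) ≤ (j : ℝ) * L := by
    have h1 : -(h / (2 * L)) ≤ (j : ℝ) := by
      rw [hj]; push_cast; linarith [Int.floor_le (h / (2 * L))]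
    have h2 : -(h / (2 * L)) * L = -(h / 2) := by field_simp
    linarith [mul_le_mul_of_nonneg_right h1 hL0.le]
  have hju : (j : ℝ) * L ≤ L - h / 2 := by
    have h1 : (j : ℝ) ≤ 1 - h / (2 * L) := by
      rw [hj]; push_cast; linarith [Int.sub_one_lt_floor (h / (2 * L))]
    have h2 : (1 - h / (2 * L)) * L = L - h / 2 := by field_simp
    linarith [mul_le_mul_of_nonneg_right h1 hL0.le]
  have hajE : (a : ℝ) ^ j = Real.exp ((j : ℝ) * L) := by
    rw [← Real.rpow_intCast a j, Real.rpow_def_of_pos ha0, hLdef, mul_comm]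
  have e1 : Real.exp (-h / 2) ≤ (a : ℝ) ^ j := by
    rw [hajE]
    exact Real.exp_le_exp.mpr (by rw [neg_div]; exact hjl)
  have e2 : (a : ℝ) ^ j ≤ a * Real.exp (-h / 2) := by
    rw [hajE, show (a : ℝ) = Real.exp L from (Real.exp_log ha0).symm, ← Real.exp_add]
    exact Real.exp_le_exp.mpr (by rw [neg_div]; linarith)
  have e3 : (a : ℝ) ^ j < Real.exp (h / 2) := by
    have : a * Real.exp (-h / 2) < Real.exp (h / 2) := by
      rw [show (a : ℝ) = Real.exp L from (Real.exp_log ha0).symm, ← Real.exp_add]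
      exact Real.exp_lt_exp.mpr (by rw [neg_div]; linarith)
    linarith
  have hajpos : (0 : ℝ) < (a : ℝ) ^ j := zpow_pos ha0 j
  set n : ℕ := ⌈Real.exp (h / 2)⌉₊ with hn
  -- the sample points
  set pt : Fin n → SG := fun i =>
    ((a ^ j : ℝ), b * ((0 : ℤ) : ℝ),
      Ss (b * ((0 : ℤ) : ℝ)) (Aa (a ^ j) ((c * (((i : ℕ) : ℤ) : ℝ)), (c * ((0 : ℤ) : ℝ))))) with hpt
  have hptΛ : ∀ i, pt i ∈ Λ := fun i => ⟨j, 0, (((i : ℕ) : ℤ), 0), rfl⟩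
  have hEE : Real.exp (-h / 2) * Real.exp (h / 2) = 1 := by
    rw [← Real.exp_add]; ring_nf; exact Real.exp_zero
  have hptQ : ∀ i, pt i ∈ Qbox h := by
    intro i
    have hi1 : ((i : ℕ) : ℝ) < Real.exp (h / 2) := by
      have h1 : ((i : ℕ) : ℝ) + 1 ≤ (n : ℝ) := by exact_mod_cast i.isLt
      have h2 : (n : ℝ) < Real.exp (h / 2) + 1 :=
        Nat.ceil_lt_add_one (Real.exp_pos _).le
      linarith
    have hi0 : (0 : ℝ) ≤ ((i : ℕ) : ℝ) := Nat.cast_nonneg _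
    simp only [hpt, Qbox, Set.mem_prod, Set.mem_Ico, Ss, Aa, Int.cast_zero, mul_zero,
      zero_mul, add_zero, zero_add, Int.cast_natCast]
    refine ⟨⟨e1, e3⟩, ⟨by linarith, by linarith⟩, ⟨?_, ?_⟩, by linarith, by linarith⟩
    · have : (0:ℝ) ≤ (a:ℝ) ^ j * (c * ((i : ℕ) : ℝ)) := by positivity
      linarith
    · -- a^j * (c * i) < h/2
      have s1 : (a:ℝ) ^ j * (c * ((i : ℕ) : ℝ)) ≤
          a * Real.exp (-h / 2) * (c * ((i : ℕ) : ℝ)) :=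
        mul_le_mul_of_nonneg_right e2 (by positivity)
      have s2 : a * Real.exp (-h / 2) * (c * ((i : ℕ) : ℝ)) <
          a * Real.exp (-h / 2) * (c * Real.exp (h / 2)) := by
        have hcc : c * ((i : ℕ) : ℝ) < c * Real.exp (h / 2) :=
          mul_lt_mul_of_pos_left hi1 hc
        have : (0:ℝ) < a * Real.exp (-h / 2) := by positivity
        exact mul_lt_mul_of_pos_left hcc this
      have s3 : a * Real.exp (-h / 2) * (c * Real.exp (h / 2)) = a * c := by
        calc a * Real.exp (-h / 2) * (c * Real.exp (h / 2))
            = a * c * (Real.exp (-h / 2) * Real.exp (h / 2)) := by ring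
          _ = a * c := by rw [hEE, mul_one]
      linarith [s1, s2, s3]
  -- the injection into the subtype
  have hinj : Function.Injective (fun i : Fin n =>
      (⟨pt i, hptΛ i, hptQ i⟩ : ↥(Λ ∩ Qbox h))) := by
    intro i i' hii
    have hpts : pt i = pt i' := congrArg Subtype.val hii
    have hco : (a:ℝ) ^ j * (c * (((i : ℕ) : ℤ) : ℝ)) =
        (a:ℝ) ^ j * (c * (((i' : ℕ) : ℤ) : ℝ)) := by
      have := congrArg (fun p : SG => p.2.2.1) hpts
      simpa [hpt, Ss, Aa, Int.cast_zero, mul_zero, zero_mul, add_zero] using this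
    have : (((i : ℕ) : ℤ) : ℝ) = (((i' : ℕ) : ℤ) : ℝ) := by
      have h1 := mul_left_cancel₀ hajpos.ne' hco
      exact mul_left_cancel₀ hc.ne' h1
    have : (i : ℕ) = (i' : ℕ) := by exact_mod_cast this
    exact Fin.ext this
  calc ENNReal.ofReal (Real.exp (h / 2)) ≤ (n : ℝ≥0∞) := by
        rw [← ENNReal.ofReal_natCast]
        exact ENNReal.ofReal_le_ofReal (Nat.le_ceil _)
    _ = ∑' _ : Fin n, (1 : ℝ≥0∞) := by simp [tsum_fintype]
    _ ≤ ∑' _ : ↥(Λ ∩ Qbox h), (1 : ℝ≥0∞) :=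
        ENNReal.tsum_comp_le_tsum_of_injective hinj (fun _ => 1)
    _ = wNum Λ (fun _ => 1) (Qbox h) := by simp [wNum]


/-- The co-shearlet parameter set `Λ = {(a^j, bk, S_{bk} A_{a^j} cm)}` with weight `w ≡ 1`
satisfies `D⁺(Λ,w) = ∞` and `D⁻(Λ,w) = 0`. -/
theorem coshearlet_density (a b c : ℝ) (ha : 1 < a) (hb : 0 < b) (hc : 0 < c) :
    upperDensity {p : SG | ∃ (j k : ℤ) (m : ℤ × ℤ),
        p = ((a ^ j : ℝ), b * k, Ss (b * k) (Aa (a ^ j) ((c * m.1 : ℝ), (c * m.2 : ℝ))))}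
      (fun _ => 1) = ⊤ ∧
    lowerDensity {p : SG | ∃ (j k : ℤ) (m : ℤ × ℤ),
        p = ((a ^ j : ℝ), b * k, Ss (b * k) (Aa (a ^ j) ((c * m.1 : ℝ), (c * m.2 : ℝ))))}
      (fun _ => 1) = 0 := by
  set Λ : Set SG := {p : SG | ∃ (j k : ℤ) (m : ℤ × ℤ),
    p = ((a ^ j : ℝ), b * k, Ss (b * k) (Aa (a ^ j) ((c * m.1 : ℝ), (c * m.2 : ℝ))))} with hΛ
  constructor
  · -- upper density is ⊤
    have hbox : ∀ h : ℝ, boxAt h ((1:ℝ), (0:ℝ), (0:ℝ), (0:ℝ)) = Qbox h := by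
      intro h
      unfold boxAt
      have hid : (fun p : SG => smul ((1:ℝ), (0:ℝ), (0:ℝ), (0:ℝ)) p) = id := by
        funext p
        simp [smul, Ss, Aa, Prod.ext_iff]
      rw [hid, Set.image_id]
    have hmono : ∀ᶠ h in atTop, ENNReal.ofReal (Real.exp (h/2) / h^4) ≤
        ⨆ (g : SG) (_ : 0 < g.1), wNum Λ (fun _ => 1) (boxAt h g) / ENNReal.ofReal (h ^ 4) := by
      filter_upwards [eventually_ge_atTop (1:ℝ), eventually_gt_atTop (Real.log a),
        eventually_gt_atTop (4*a*c)] with h h1 h2 h3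
      have hcount := upper_box_count a b c h ha hb hc h1 h2 h3
      have h4pos : (0:ℝ) < h^4 := by positivity
      have step : ENNReal.ofReal (Real.exp (h/2) / h^4) ≤
          wNum Λ (fun _ => 1) (boxAt h ((1:ℝ), (0:ℝ), (0:ℝ), (0:ℝ))) / ENNReal.ofReal (h^4) := by
        rw [hbox h, ENNReal.ofReal_div_of_pos h4pos]
        exact ENNReal.div_le_div_right hcount _
      refine step.trans ?_
      exact le_iSup_of_le ((1:ℝ), (0:ℝ), (0:ℝ), (0:ℝ))
        (le_iSup_of_le (by norm_num) le_rfl)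
    have hphi : Tendsto (fun h : ℝ => ENNReal.ofReal (Real.exp (h/2) / h^4)) atTop (nhds ⊤) := by
      apply ENNReal.tendsto_ofReal_atTop.comp
      have t1 : Tendsto (fun h : ℝ => Real.exp (h/2) / (h/2)^4) atTop atTop :=
        (Real.tendsto_exp_div_pow_atTop 4).comp
          (Tendsto.atTop_div_const (by norm_num) tendsto_id)
      have t2 := Tendsto.atTop_div_const (show (0:ℝ) < 16 by norm_num) t1
      refine t2.congr' ?_
      filter_upwards [eventually_gt_atTop (0:ℝ)] with h hp
      field_simp
      ring
    have hlim : Filter.limsup (fun h : ℝ => ENNReal.ofReal (Real.exp (h/2) / h^4))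
        Filter.atTop = ⊤ := hphi.limsup_eq
    exact top_unique (hlim ▸ Filter.limsup_le_limsup hmono)
  · -- lower density is 0
    have hev : ∀ᶠ h in atTop,
        (⨅ (g : SG) (_ : 0 < g.1), wNum Λ (fun _ => 1) (boxAt h g) / ENNReal.ofReal (h ^ 4))
          = 0 := by
      filter_upwards [eventually_ge_atTop (1:ℝ), eventually_ge_atTop (129/c)] with h h1 h2
      have hch : (129:ℝ) ≤ c * h := by
        rw [div_le_iff₀ hc] at h2; linarith
      have hq : h/8 + 1 ≤ Real.exp (h/8) := Real.add_one_le_exp _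
      have hsq : Real.exp (h/8) * Real.exp (h/8) = Real.exp (h/4) := by
        rw [← Real.exp_add]; ring_nf
      have hcexp : 2 * h < c * Real.exp (h/4) := by
        nlinarith [mul_le_mul hq hq (by linarith) (Real.exp_pos (h/8)).le,
          mul_nonneg (by linarith : (0:ℝ) ≤ c * h - 129) (by linarith : (0:ℝ) ≤ h)]
      have hem := lower_box_empty a b c h ha hc h1 hcexp
      rw [← hΛ] at hem
      have hz : wNum Λ (fun _ => 1)
          (boxAt h (Real.exp h, 0, h * Real.exp (h / 2), 0)) = 0 := by
        rw [wNum, hem]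
        exact tsum_empty
      refine le_antisymm ?_ (zero_le)
      refine iInf_le_of_le (Real.exp h, 0, h * Real.exp (h / 2), 0) ?_
      refine iInf_le_of_le (by exact Real.exp_pos h) ?_
      rw [hz, ENNReal.zero_div]
    calc lowerDensity Λ (fun _ => 1)
        = Filter.liminf (fun _ : ℝ => (0:ℝ≥0∞)) Filter.atTop := Filter.liminf_congr hev
      _ = 0 := Filter.liminf_const 0

end
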